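/- Let q = p be an odd prime and let U ⊆ F_p³ be a set of p² − 2 points that does not determine the points of C, is not extendable, and satisfies ∑_{u∈U} u = (0,0,0). Then for every nonzero (y,z,w) ∈ F_p³: σ₂(y,z,w) = 0 if and only if the line at infinity l(y,z,w) is tangent to C. (In other words, the curve σ₂(Y,Z,W) = 0 is the dual of the conic C.) -/

import Mathlib

open Finset

/-- The dot product on `F³`. -/
def dot3 {F : Type*} [Field F] (u v : F × F × F) : F :=
  u.1 * v.1 + u.2.1 * v.2.1 + u.2.2 * v.2.2

/-- The nondegenerate quadratic form `Q(t₀,t₁,t₂) = t₁² − t₀t₂` defining the conic `C`. -/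
def quadQ {F : Type*} [Field F] (t : F × F × F) : F :=
  t.2.1 ^ 2 - t.1 * t.2.2

/-- `U` does not determine the points of the conic `C`:
`Q(u − u') ≠ 0` for all distinct `u, u' ∈ U`. -/
def NoDetermine {F : Type*} [Field F] (U : Finset (F × F × F)) : Prop :=
  ∀ u ∈ U, ∀ u' ∈ U, u ≠ u' → quadQ (u - u') ≠ 0

/-- The line at infinity `l(y,z,w)` meets the conic `C`. -/
def MeetsConic {F : Type*} [Field F] (v : F × F × F) : Prop :=
  ∃ t : F × F × F, t ≠ 0 ∧ quadQ t = 0 ∧ dot3 v t = 0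

/-- `σ_i(y,z,w)`: the `i`-th elementary symmetric function of the multiset
`{u·(y,z,w) : u ∈ U}`. -/
def sigmaU {F : Type*} [Field F] (U : Finset (F × F × F)) (v : F × F × F) (i : ℕ) : F :=
  (U.val.map (fun u => dot3 u v)).esymm i

/-- The line at infinity `l(y,z,w)` is tangent to the conic `C`. -/
def TangentToConic {F : Type*} [Field F] (v : F × F × F) : Prop :=
  ∃ t : F × F × F, t ≠ 0 ∧ quadQ t = 0 ∧ dot3 v t = 0 ∧
    ∀ t' : F × F × F, t' ≠ 0 → quadQ t' = 0 → dot3 v t' = 0 → ∃ c : F, t' = c • t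

private lemma cancel₀ {F : Type*} [Field F] {a b : F} (ha : a ≠ 0) (h : a * b = 0) : b = 0 :=
  (mul_eq_zero.mp h).resolve_left ha

/-- quotient map modulo the isotropic direction `(1,s,s²)` -/
def projS {F : Type*} [Field F] (s : F) : (F × F × F) →+ (F × F) :=
  AddMonoidHom.mk' (fun u => (s * u.1 - u.2.1, u.2.2 - s * u.2.1))
    (by intro a b; simp [Prod.ext_iff]; constructor <;> ring)

/-- quotient map modulo the isotropic direction `(0,0,1)` -/
def projI {F : Type*} [Field F] : (F × F × F) →+ (F × F) :=
  AddMonoidHom.mk' (fun u => (u.1, u.2.1)) (by intro a b; simp)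

lemma projS_apply {F : Type*} [Field F] (s : F) (u : F × F × F) :
    projS s u = (s * u.1 - u.2.1, u.2.2 - s * u.2.1) := rfl

lemma projI_apply {F : Type*} [Field F] (u : F × F × F) :
    projI u = (u.1, u.2.1) := rfl

lemma quadQ_neg {F : Type*} [Field F] (d : F × F × F) : quadQ (-d) = quadQ d := by
  obtain ⟨a, b, c⟩ := d; simp [quadQ]

lemma iso_dir {F : Type*} [Field F] (d : F × F × F) (hq : quadQ d = 0) :
    (∃ s : F, projS s d = 0) ∨ projI d = 0 := by
  by_cases h1 : d.1 = 0
  · right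
    have h2 : d.2.1 = 0 := by
      have : d.2.1 ^ 2 = 0 := by
        have h := hq; unfold quadQ at h; rw [h1] at h; linear_combination h
      exact pow_eq_zero_iff (by norm_num) |>.mp this
    rw [projI_apply, h1, h2]; rfl
  · left
    refine ⟨d.2.1 / d.1, ?_⟩
    rw [projS_apply, Prod.ext_iff]
    constructor
    · simp only [Prod.fst, Prod.fst_zero]
      field_simp; ring
    · simp only [Prod.snd, Prod.snd_zero]
      unfold quadQ at hq
      field_simp
      linear_combination -hq

lemma esymm_two {R : Type*} [CommRing R] (s : Multiset R) :
    2 * s.esymm 2 = s.sum ^ 2 - (s.map (fun x => x * x)).sum := by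
  induction s using Multiset.induction with
  | empty => simp [Multiset.esymm, Multiset.powersetCard_zero_right 1]
  | cons a s ih =>
      have h1 : (a ::ₘ s).esymm 2 = a * s.esymm 1 + s.esymm 2 := by
        unfold Multiset.esymm
        rw [Multiset.powersetCard_cons, Multiset.map_add, Multiset.sum_add, add_comm]
        congr 1
        rw [Multiset.map_map]
        simp only [Function.comp_apply, Multiset.prod_cons]
        rw [← Multiset.sum_map_mul_left]
      have h2 : s.esymm 1 = s.sum := by
        unfold Multiset.esymm
        rw [Multiset.powersetCard_one, Multiset.map_map]
        simp
      rw [h1, h2, Multiset.sum_cons, Multiset.map_cons, Multiset.sum_cons, mul_add, ih]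
      ring

lemma tangent_iff {F : Type*} [Field F] (h2 : (2:F) ≠ 0) (v : F × F × F) (hv : v ≠ 0) :
    TangentToConic v ↔ v.2.1 ^ 2 - 4 * (v.1 * v.2.2) = 0 := by
  obtain ⟨y, z, w⟩ := v
  simp only [Prod.mk.injEq, ne_eq, Prod.mk_eq_zero, not_and] at hv ⊢
  have h4 : (4:F) ≠ 0 := by
    have : (4:F) = 2 * 2 := by norm_num
    rw [this]; exact mul_ne_zero h2 h2
  constructor
  · rintro ⟨t, ht0, htQ, htd, huniq⟩
    by_cases hw : w = 0
    · have hz : z = 0 := by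
        by_contra hz
        obtain ⟨c1, hc1⟩ := huniq (0,0,1) (by simp [Prod.ext_iff]) (by simp [quadQ])
          (by simp [dot3, hw])
        obtain ⟨c2, hc2⟩ := huniq (1, -y/z, (-y/z)^2)
          (by simp [Prod.ext_iff]) (by simp [quadQ]) (by simp [dot3, hw]; field_simp; ring)
        rw [Prod.ext_iff, Prod.ext_iff] at hc1 hc2
        simp only [Prod.smul_fst, Prod.smul_snd, smul_eq_mul] at hc1 hc2
        have ht1 : t.1 = 0 := by
          rcases hc1 with ⟨h1, _, h3⟩
          have hc1ne : c1 ≠ 0 := by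
            intro h; rw [h, zero_mul] at h3; exact one_ne_zero h3
          have := h1.symm
          rcases mul_eq_zero.mp this with h | h
          · exact absurd h hc1ne
          · exact h
        have := hc2.1
        rw [ht1, mul_zero] at this
        exact one_ne_zero this
      rw [hw, hz]; ring
    · have ha : t.1 ≠ 0 := by
        intro ha
        have hb : t.2.1 = 0 := by
          unfold quadQ at htQ; rw [ha] at htQ
          have : t.2.1 ^ 2 = 0 := by linear_combination htQ
          exact pow_eq_zero_iff (by norm_num) |>.mp this
        have hc : t.2.2 = 0 := by
          unfold dot3 at htd; rw [ha, hb] at htd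
          simp at htd
          tauto
        exact ht0 (by rw [Prod.ext_iff, Prod.ext_iff]; simp [ha, hb, hc])
      have htQ' : t.2.1 ^ 2 = t.1 * t.2.2 := by
        unfold quadQ at htQ; linear_combination htQ
      have hd : y * t.1 + z * t.2.1 + w * t.2.2 = 0 := by
        unfold dot3 at htd; linear_combination htd
      obtain ⟨β, hβt⟩ : ∃ β : F, β * t.1 = t.2.1 := ⟨t.2.1 / t.1, by field_simp⟩
      have hroot : y + z * β + w * β^2 = 0 := by
        refine cancel₀ (pow_ne_zero 2 ha) ?_
        linear_combination t.1 * hd + w * htQ' + (z * t.1 + w * (β * t.1 + t.2.1)) * hβt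
      obtain ⟨β', hβ'w⟩ : ∃ β' : F, w * β' = -z - w * β :=
        ⟨(-z - w * β)/w, by field_simp⟩
      have hroot' : y + z * β' + w * β'^2 = 0 := by
        refine cancel₀ (pow_ne_zero 2 hw) ?_
        linear_combination w^2 * hroot + (w^2*(β' - β)) * hβ'w
      obtain ⟨c, hc'⟩ := huniq (1, β', β'^2) (by simp [Prod.ext_iff])
        (by simp [quadQ]) (by unfold dot3; simp only; linear_combination hroot')
      rw [Prod.ext_iff, Prod.ext_iff] at hc'
      simp only [Prod.smul_fst, Prod.smul_snd, smul_eq_mul] at hc'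
      obtain ⟨h1, h2', _⟩ := hc'
      have hct : c * t.1 = 1 := h1.symm
      have hββ : β' = β := by
        have e1 : β' * t.1 = t.2.1 := by rw [h2']; linear_combination t.2.1 * hct
        exact mul_right_cancel₀ ha (e1.trans hβt.symm)
      have h2β : z + 2 * (w * β) = 0 := by
        linear_combination hβ'w - w * hββ
      linear_combination (-4*w) * hroot + (z + 2*(w*β)) * h2β
  · intro heq
    by_cases hw : w = 0
    · have hz : z = 0 := by
        rw [hw] at heq
        have : z ^ 2 = 0 := by linear_combination heq
        exact pow_eq_zero_iff (by norm_num) |>.mp this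
      have hy : y ≠ 0 := fun hy => (hv hy hz) hw
      refine ⟨(0,0,1), by simp [Prod.ext_iff], by simp [quadQ], by simp [dot3, hz, hw], ?_⟩
      intro t' ht'0 ht'Q ht'd
      have ha : t'.1 = 0 := by
        unfold dot3 at ht'd
        rw [hz, hw] at ht'd
        simp at ht'd
        tauto
      have hb : t'.2.1 = 0 := by
        unfold quadQ at ht'Q; rw [ha] at ht'Q
        have : t'.2.1 ^ 2 = 0 := by linear_combination ht'Q
        exact pow_eq_zero_iff (by norm_num) |>.mp this
      exact ⟨t'.2.2, by rw [Prod.ext_iff, Prod.ext_iff]; simp [ha, hb]⟩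
    · obtain ⟨σ, hσw⟩ : ∃ σ : F, 2 * (w * σ) = -z :=
        ⟨-(z/(2*w)), by field_simp⟩
      have hQt : quadQ (1, σ, σ^2) = 0 := by simp [quadQ]
      have hrootσ : y + z * σ + w * σ^2 = 0 := by
        refine cancel₀ (mul_ne_zero h4 (pow_ne_zero 2 hw)) ?_
        linear_combination (-w)*heq + (z*w + 2*w^2*σ)*hσw
      have hdt : dot3 (y,z,w) (1, σ, σ^2) = 0 := by
        unfold dot3; simp only; linear_combination hrootσ
      refine ⟨(1, σ, σ^2), by simp [Prod.ext_iff], hQt, hdt, ?_⟩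
      intro t' ht'0 ht'Q ht'd
      by_cases ha : t'.1 = 0
      · exfalso
        have hb : t'.2.1 = 0 := by
          unfold quadQ at ht'Q; rw [ha] at ht'Q
          have : t'.2.1 ^ 2 = 0 := by linear_combination ht'Q
          exact pow_eq_zero_iff (by norm_num) |>.mp this
        have hcc : t'.2.2 = 0 := by
          unfold dot3 at ht'd; rw [ha, hb] at ht'd; simp at ht'd
          tauto
        exact ht'0 (by rw [Prod.ext_iff, Prod.ext_iff]; simp [ha, hb, hcc])
      · have ht'Q' : t'.2.1 ^ 2 = t'.1 * t'.2.2 := by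
          unfold quadQ at ht'Q; linear_combination ht'Q
        have hd' : y * t'.1 + z * t'.2.1 + w * t'.2.2 = 0 := by
          unfold dot3 at ht'd; linear_combination ht'd
        obtain ⟨b, hbt⟩ : ∃ b : F, b * t'.1 = t'.2.1 := ⟨t'.2.1 / t'.1, by field_simp⟩
        have hroot : y + z * b + w * b^2 = 0 := by
          refine cancel₀ (pow_ne_zero 2 ha) ?_
          linear_combination t'.1 * hd' + w * ht'Q' + (z * t'.1 + w * (b * t'.1 + t'.2.1)) * hbt
        have hfact : (b - σ) * (z + w * (b + σ)) = 0 := by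
          linear_combination hroot - hrootσ
        have hbσ : b = σ := by
          rcases mul_eq_zero.mp hfact with h | h
          · linear_combination h
          · have : 2 * (w * b) = -z := by linear_combination 2*h - hσw
            have hbb : w * b = w * σ := by
              refine mul_left_cancel₀ h2 ?_
              rw [this, hσw]
            exact mul_left_cancel₀ hw hbb
        refine ⟨t'.1, ?_⟩
        rw [Prod.ext_iff, Prod.ext_iff]
        simp only [Prod.smul_fst, Prod.smul_snd, smul_eq_mul]
        refine ⟨by ring, ?_, ?_⟩
        · rw [← hbσ]; linear_combination -hbt
        · rw [← hbσ]
          refine mul_left_cancel₀ ha (?_ : t'.1 * t'.2.2 = t'.1 * (t'.1 * b^2))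
          linear_combination (-(b*t'.1 + t'.2.1))*hbt - ht'Q'

section Aux
variable {F : Type*} [Field F] [Fintype F] [DecidableEq F]

omit [DecidableEq F] in
lemma sum_univ_F (h2 : (2:F) ≠ 0) : ∑ x : F, x = 0 := by
  have h : ∑ x : F, x = ∑ x : F, -x :=
    (Fintype.sum_equiv (Equiv.neg F) _ _ (fun x => by simp)).symm
  have : (2:F) * ∑ x : F, x = 0 := by
    rw [two_mul]
    nth_rewrite 2 [h]
    rw [← Finset.sum_add_distrib]
    simp
  exact (mul_eq_zero.mp this).resolve_left h2

omit [DecidableEq F] in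
lemma sum_quad (hq0 : (Fintype.card F : F) = 0) (h2 : (2:F) ≠ 0) (α β γ δ : F) :
    ∑ m : F × F, (α * m.1 + β * m.2) * (γ * m.1 + δ * m.2) = 0 := by
  rw [Fintype.sum_prod_type]
  have hstep : ∀ x : F, ∑ y : F, (α * x + β * y) * (γ * x + δ * y)
      = (Fintype.card F : F) * (α * γ * (x*x)) + (α * δ + β * γ) * x * (∑ y : F, y)
        + β * δ * (∑ y : F, y * y) := by
    intro x
    have : ∀ y : F, (α * x + β * y) * (γ * x + δ * y)
        = α * γ * (x*x) + ((α * δ + β * γ) * x) * y + β * δ * (y * y) := by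
      intro y; ring
    rw [Finset.sum_congr rfl (fun y _ => this y)]
    have e1 : ∑ y : F, ((α * δ + β * γ) * x) * y = ((α * δ + β * γ) * x) * ∑ y : F, y :=
      (Finset.mul_sum _ _ _).symm
    have e2 : ∑ y : F, β * δ * (y * y) = β * δ * ∑ y : F, y * y :=
      (Finset.mul_sum _ _ _).symm
    rw [Finset.sum_add_distrib, Finset.sum_add_distrib, e1, e2,
      Finset.sum_const, card_univ, nsmul_eq_mul]
  rw [Finset.sum_congr rfl (fun x _ => hstep x)]
  rw [sum_univ_F h2, hq0]
  simp only [zero_mul, mul_zero, add_zero, zero_add]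
  rw [Finset.sum_const, card_univ, nsmul_eq_mul, hq0, zero_mul]

omit [DecidableEq F] in
lemma sum_univ_FF (hq0 : (Fintype.card F : F) = 0) : ∑ m : F × F, m = 0 := by
  rw [Prod.ext_iff]
  constructor
  · rw [Prod.fst_sum, Fintype.sum_prod_type]
    simp [Finset.sum_const, card_univ, nsmul_eq_mul, ← Finset.sum_mul, hq0]
  · rw [Prod.snd_sum, Fintype.sum_prod_type]
    simp [Finset.sum_const, card_univ, nsmul_eq_mul, hq0, Finset.mul_sum]

lemma missing_pair {p : ℕ} (hp : p.Prime)
    (hcard : Fintype.card F = p)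
    (U : Finset (F × F × F)) (hUcard : U.card = p ^ 2 - 2) (hsum : ∑ u ∈ U, u = 0)
    (π : (F × F × F) →+ (F × F)) (hinj : ∀ u ∈ U, ∀ u' ∈ U, π u = π u' → u = u') :
    ∃ A : F × F, A ≠ -A ∧ U.image π = univ \ {A, -A} := by
  have hq0 : (Fintype.card F : F) = 0 := Nat.cast_card_eq_zero F
  have hcFF : Fintype.card (F × F) = p ^ 2 := by rw [Fintype.card_prod, hcard, sq]
  have himgcard : (U.image π).card = p ^ 2 - 2 := by
    rw [Finset.card_image_of_injOn (fun u hu u' hu' h => hinj u hu u' hu' h), hUcard]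
  have hp2 : 2 ≤ p ^ 2 := le_trans (by norm_num) (Nat.pow_le_pow_left hp.two_le 2)
  have hDcard : (univ \ U.image π).card = 2 := by
    rw [Finset.card_sdiff_of_subset (Finset.subset_univ _), Finset.card_univ, hcFF, himgcard]
    omega
  obtain ⟨A, B, hAB, hD⟩ := Finset.card_eq_two.mp hDcard
  have hsumimg : ∑ m ∈ U.image π, m = 0 := by
    rw [Finset.sum_image (fun u hu u' hu' h => hinj u hu u' hu' h), ← map_sum, hsum, map_zero]
  have hsplit : ∑ m ∈ univ \ U.image π, m + ∑ m ∈ U.image π, m = ∑ m : F × F, m :=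
    Finset.sum_sdiff (Finset.subset_univ _)
  have hABsum : A + B = 0 := by
    have h0 : ∑ m ∈ univ \ U.image π, m = 0 := by
      rw [hsumimg, add_zero] at hsplit
      rw [hsplit, sum_univ_FF hq0]
    rw [hD, Finset.sum_pair hAB] at h0
    exact h0
  have hBA : B = -A := by linear_combination hABsum
  refine ⟨A, ?_, ?_⟩
  · rw [← hBA]; exact fun h => hAB h
  · have : U.image π = univ \ (univ \ U.image π) :=
      (Finset.sdiff_sdiff_eq_self (Finset.subset_univ _)).symm
    rw [this, hD, hBA]

lemma sum_missing (U : Finset (F × F × F))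
    (π : (F × F × F) →+ (F × F)) (hinj : ∀ u ∈ U, ∀ u' ∈ U, π u = π u' → u = u')
    (A : F × F) (hA : A ≠ -A) (himg : U.image π = univ \ {A, -A})
    (G : F × F → F) (hG : ∑ m : F × F, G m = 0) :
    ∑ u ∈ U, G (π u) = -(G A) - G (-A) := by
  have h1 : ∑ u ∈ U, G (π u) = ∑ m ∈ U.image π, G m :=
    (Finset.sum_image (fun u hu u' hu' h => hinj u hu u' hu' h)).symm
  rw [h1, himg, Finset.sum_sdiff_eq_sub (Finset.subset_univ _), hG,
    Finset.sum_pair hA]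
  ring

end Aux

theorem stmt_16 {p : ℕ} (hp : p.Prime) (hodd : Odd p)
    {F : Type*} [Field F] [Fintype F] [DecidableEq F]
    (hcard : Fintype.card F = p)
    (U : Finset (F × F × F))
    (hUcard : U.card = p ^ 2 - 2)
    (hU : NoDetermine U)
    (hmax : ¬ ∃ v : F × F × F, v ∉ U ∧ NoDetermine (insert v U))
    (hsum : ∑ u ∈ U, u = 0) :
    ∀ v : F × F × F, v ≠ 0 → (sigmaU U v 2 = 0 ↔ TangentToConic v) := by
  intro v hv
  -- characteristic facts
  have hq0 : (Fintype.card F : F) = 0 := Nat.cast_card_eq_zero F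
  have hpF : ((p : ℕ) : F) = 0 := by rw [← hcard]; exact hq0
  have h2F : (2 : F) ≠ 0 := by
    obtain ⟨k, hk⟩ := hodd
    intro h2eq
    have hcast : ((2 * k + 1 : ℕ) : F) = 0 := by rw [← hk]; exact hpF
    push_cast at hcast
    rw [h2eq] at hcast
    simp at hcast
  -- injectivity of the quotient maps on U
  have hinjS : ∀ s : F, ∀ u ∈ U, ∀ u' ∈ U, projS s u = projS s u' → u = u' := by
    intro s u hu u' hu' h
    by_contra hne
    apply hU u hu u' hu' hne
    have h0 : projS s (u - u') = 0 := by rw [map_sub, h, sub_self]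
    rw [projS_apply, Prod.ext_iff] at h0
    obtain ⟨e1, e2⟩ := h0
    simp only [Prod.fst_sub, Prod.snd_sub, Prod.fst_zero, Prod.snd_zero] at e1 e2
    unfold quadQ
    simp only [Prod.fst_sub, Prod.snd_sub]
    linear_combination (-(u.2.1 - u'.2.1)) * e1 - (u.1 - u'.1) * e2
  have hinjI : ∀ u ∈ U, ∀ u' ∈ U, projI u = projI u' → u = u' := by
    intro u hu u' hu' h
    by_contra hne
    apply hU u hu u' hu' hne
    have h0 : projI (u - u') = 0 := by rw [map_sub, h, sub_self]
    rw [projI_apply, Prod.ext_iff] at h0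
    obtain ⟨e1, e2⟩ := h0
    simp only [Prod.fst_sub, Prod.snd_sub, Prod.fst_zero, Prod.snd_zero] at e1 e2
    unfold quadQ
    simp only [Prod.fst_sub, Prod.snd_sub]
    linear_combination ((u.2.1 - u'.2.1)) * e2 - (u.2.2 - u'.2.2) * e1
  -- missing pairs
  have hmiss : ∀ s : F, ∃ A : F × F, A ≠ -A ∧ U.image (projS s) = univ \ {A, -A} :=
    fun s => missing_pair hp hcard U hUcard hsum (projS s) (hinjS s)
  choose A hA1 hA2 using hmiss
  obtain ⟨W, hW1, hW2⟩ := missing_pair hp hcard U hUcard hsum projI hinjI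
  have hsumS : ∀ s : F, ∀ G : F × F → F, (∑ m : F × F, G m = 0) →
      ∑ u ∈ U, G (projS s u) = -(G (A s)) - G (-(A s)) :=
    fun s G hG => sum_missing U (projS s) (hinjS s) (A s) (hA1 s) (hA2 s) G hG
  have hsumI : ∀ G : F × F → F, (∑ m : F × F, G m = 0) →
      ∑ u ∈ U, G (projI u) = -(G W) - G (-W) :=
    fun G hG => sum_missing U projI hinjI W hW1 hW2 G hG
  -- compatibility relations
  have hC1 : ∀ s : F, (A s).1 * (A s).1 = (s * W.1 - W.2) * (s * W.1 - W.2) := by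
    intro s
    have e1 := hsumS s (fun m => m.1 * m.1) (by simpa using sum_quad hq0 h2F 1 0 1 0)
    have e2 := hsumI (fun m => (s * m.1 - m.2) * (s * m.1 - m.2))
      (by simpa [neg_one_mul, ← sub_eq_add_neg] using sum_quad hq0 h2F s (-1) s (-1))
    have e3 : ∑ u ∈ U, (fun m : F × F => m.1 * m.1) (projS s u)
        = ∑ u ∈ U, (fun m : F × F => (s * m.1 - m.2) * (s * m.1 - m.2)) (projI u) :=
      Finset.sum_congr rfl (fun u _ => by simp only [projS_apply, projI_apply]; try ring)
    rw [e1, e2] at e3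
    simp only [Prod.fst_neg, Prod.snd_neg] at e3
    refine mul_left_cancel₀ h2F ?_
    linear_combination -e3
  have hC2 : ∀ s r : F, (r * (A s).1 + (A s).2) * (r * (A s).1 + (A s).2)
      = (s * (A r).1 + (A r).2) * (s * (A r).1 + (A r).2) := by
    intro s r
    have e1 := hsumS s (fun m => (r * m.1 + m.2) * (r * m.1 + m.2))
      (by simpa using sum_quad hq0 h2F r 1 r 1)
    have e2 := hsumS r (fun m => (s * m.1 + m.2) * (s * m.1 + m.2))
      (by simpa using sum_quad hq0 h2F s 1 s 1)
    have e3 : ∑ u ∈ U, (fun m : F × F => (r * m.1 + m.2) * (r * m.1 + m.2)) (projS s u)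
        = ∑ u ∈ U, (fun m : F × F => (s * m.1 + m.2) * (s * m.1 + m.2)) (projS r u) :=
      Finset.sum_congr rfl (fun u _ => by simp only [projS_apply]; try ring)
    rw [e1, e2] at e3
    simp only [Prod.fst_neg, Prod.snd_neg] at e3
    refine mul_left_cancel₀ h2F ?_
    linear_combination -e3
  -- the key geometric fact: missing classes sit on tangent planes through the origin
  have hK6 : W.1 = 0 ∧ ∀ s : F, (A s).2 + s * (A s).1 = 0 := by
    by_contra hnot
    -- if the configuration of missing classes is not of tangent type, U is extendable
    obtain ⟨η, hηdef⟩ : ∃ η : F → F, η = fun s => (s * W.1 - W.2) / (A s).1 := ⟨_, rfl⟩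
    obtain ⟨cfun, hcdef⟩ : ∃ c : F → F, c = fun s => η s * (A s).2 + s * W.2 := ⟨_, rfl⟩
    have hηu : ∀ s : F, (A s).1 ≠ 0 → η s * (A s).1 = s * W.1 - W.2 := by
      intro s h; rw [hηdef]; exact div_mul_cancel₀ _ h
    have hηsq : ∀ s : F, (A s).1 ≠ 0 → η s * η s = 1 := by
      intro s h
      have e := hηu s h
      have e5 : ((A s).1 * (A s).1) * (η s * η s - 1) = 0 := by
        linear_combination (η s * (A s).1 + (s * W.1 - W.2)) * e - hC1 s
      have e6 := cancel₀ (mul_ne_zero h h) e5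
      linear_combination e6
    have hkey : ∀ s r : F, (A s).1 ≠ 0 →
        η s * (r * (A s).1 + (A s).2) = cfun s + r * s * W.1 - (r + s) * W.2 := by
      intro s r h
      simp only [hcdef]
      linear_combination r * hηu s h
    have hrel : ∀ s r : F, (A s).1 ≠ 0 → (A r).1 ≠ 0 →
        (cfun s - cfun r) * (cfun s + cfun r + 2 * (r * s * W.1 - (r + s) * W.2)) = 0 := by
      intro s r hs hr
      have h := hC2 s r
      have e1 := hkey s r hs
      have e2 := hkey r s hr
      have hs2 := hηsq s hs
      have hr2 := hηsq r hr
      linear_combination h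
        + ((r * (A s).1 + (A s).2) * (r * (A s).1 + (A s).2)) * hs2
        - ((s * (A r).1 + (A r).2) * (s * (A r).1 + (A r).2)) * hr2
        - (η s * (r * (A s).1 + (A s).2) + (cfun s + r * s * W.1 - (r + s) * W.2)) * e1
        + (η r * (s * (A r).1 + (A r).2) + (cfun r + s * r * W.1 - (s + r) * W.2)) * e2
    -- the generic verification that (W.1, W.2, c) lies on the missing line of direction s
    have hgen : ∀ (cc : F) (s : F), (A s).1 ≠ 0 → cc = cfun s →
        projS s (W.1, W.2, cc) = A s ∨ projS s (W.1, W.2, cc) = -(A s) := by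
      intro cc s h hcceq
      have e := hηu s h
      have e2 : cfun s = η s * (A s).2 + s * W.2 := by rw [hcdef]
      rcases mul_self_eq_one_iff.mp (hηsq s h) with h1 | h1
      · left
        rw [projS_apply]
        refine Prod.ext_iff.mpr ⟨?_, ?_⟩
        · show s * W.1 - W.2 = (A s).1
          rw [h1, one_mul] at e; exact e.symm
        · show cc - s * W.2 = (A s).2
          rw [hcceq, e2, h1, one_mul]; ring
      · right
        rw [projS_apply]
        refine Prod.ext_iff.mpr ⟨?_, ?_⟩
        · show s * W.1 - W.2 = (-(A s)).1
          rw [h1] at e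
          simp only [Prod.fst_neg]
          linear_combination -e
        · show cc - s * W.2 = (-(A s)).2
          simp only [Prod.snd_neg]
          rw [hcceq, e2, h1]; ring
    -- a point lying on missing lines in every direction contradicts maximality
    have hfinal : ∀ zc : F × F × F, (projI zc = W ∨ projI zc = -W) →
        (∀ s : F, projS s zc = A s ∨ projS s zc = -(A s)) → False := by
      intro zc hzI hzS
      apply hmax
      have hzU : zc ∉ U := by
        intro hzU
        have hmem : projI zc ∈ U.image projI := Finset.mem_image_of_mem _ hzU
        rw [hW2, Finset.mem_sdiff] at hmem
        apply hmem.2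
        rcases hzI with h | h <;> rw [h] <;> simp
      refine ⟨zc, hzU, ?_⟩
      have hzd : ∀ u' ∈ U, quadQ (zc - u') ≠ 0 := by
        intro u' hu' h0
        rcases iso_dir _ h0 with ⟨s, hs⟩ | hs
        · have heq : projS s zc = projS s u' := by
            have h' : projS s zc - projS s u' = 0 := by rw [← map_sub, hs]
            exact sub_eq_zero.mp h'
          have hmem : projS s u' ∈ U.image (projS s) := Finset.mem_image_of_mem _ hu'
          rw [hA2 s, Finset.mem_sdiff] at hmem
          apply hmem.2
          rcases hzS s with h | h <;> rw [← heq, h] <;> simp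
        · have heq : projI zc = projI u' := by
            have h' : projI zc - projI u' = 0 := by rw [← map_sub, hs]
            exact sub_eq_zero.mp h'
          have hmem : projI u' ∈ U.image projI := Finset.mem_image_of_mem _ hu'
          rw [hW2, Finset.mem_sdiff] at hmem
          apply hmem.2
          rcases hzI with h | h <;> rw [← heq, h] <;> simp
      intro a ha b hb hne
      rw [Finset.mem_insert] at ha hb
      rcases ha with ha | ha <;> rcases hb with hb | hb
      · exact absurd (ha.trans hb.symm) hne
      · rw [ha]; exact hzd b hb
      · rw [hb]
        intro h0
        apply hzd a ha
        have hq' : quadQ (zc - a) = quadQ (a - zc) := by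
          rw [← quadQ_neg (a - zc), neg_sub]
        rw [hq', h0]
      · exact hU a ha b hb hne
    rcases eq_or_ne W.1 0 with hX0 | hX0
    · -- Case I : the first coordinate of the infinite missing class vanishes
      push_neg at hnot
      obtain ⟨s₀, hs₀⟩ := hnot hX0
      have hYne : W.2 ≠ 0 := by
        intro hY0
        apply hW1
        have hW0 : W = 0 := Prod.ext_iff.mpr ⟨hX0, hY0⟩
        rw [hW0, neg_zero]
      have hu : ∀ s : F, (A s).1 ≠ 0 := by
        intro s h
        have e := hC1 s
        rw [h, hX0] at e
        apply hYne
        have e2 : W.2 * W.2 = 0 := by linear_combination -e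
        exact mul_self_eq_zero.mp e2
      have hcs₀ : cfun s₀ ≠ 2 * s₀ * W.2 := by
        intro hceq
        apply hs₀
        have e := hηu s₀ (hu s₀)
        have hηw : η s₀ * ((A s₀).2 + s₀ * (A s₀).1) = cfun s₀ - 2 * s₀ * W.2 := by
          rw [hcdef]
          simp only
          linear_combination s₀ * e + s₀^2 * hX0
        have hη0 : η s₀ ≠ 0 := by
          intro h0
          have := hηsq s₀ (hu s₀)
          rw [h0, zero_mul] at this
          exact zero_ne_one this
        apply cancel₀ hη0
        rw [hηw, hceq]; ring
      have hpair : ∀ m t : F, cfun m = cfun t ∨ cfun m + cfun t = 2 * (m + t) * W.2 := by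
        intro m t
        rcases mul_eq_zero.mp (hrel m t (hu m) (hu t)) with h | h
        · left; linear_combination h
        · right; linear_combination h - 2 * t * m * hX0
      have hconst : ∀ s r : F, cfun s = cfun r := by
        by_contra hnc
        push_neg at hnc
        obtain ⟨s, r, hsr⟩ := hnc
        have hsum_sr : cfun s + cfun r = 2 * (r + s) * W.2 := by
          rcases hpair s r with h | h
          · exact absurd h hsr
          · linear_combination h
        have h2Y : (2 : F) * W.2 ≠ 0 := mul_ne_zero h2F hYne
        obtain ⟨m₀, hm₀s, hm₀r⟩ : ∃ m : F, m ≠ s ∧ m ≠ r := by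
          by_contra hno
          push_neg at hno
          have hsub : (univ : Finset F) ⊆ {s, r} := by
            intro m _
            rw [Finset.mem_insert, Finset.mem_singleton]
            rcases eq_or_ne m s with h | h
            · exact Or.inl h
            · exact Or.inr (hno m h)
          have hle := Finset.card_le_card hsub
          rw [card_univ, hcard] at hle
          have hcard2 : ({s, r} : Finset F).card ≤ 2 :=
            (Finset.card_insert_le _ _).trans (by simp)
          have hodd' : p % 2 = 1 := Nat.odd_iff.mp hodd
          have h2p := hp.two_le
          omega
        have hcs : cfun s = 2 * s * W.2 := by
          rcases hpair m₀ s with h1 | h1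
          · rcases hpair m₀ r with hB | hB
            · exact absurd (h1.symm.trans hB) hsr
            · exfalso
              apply hm₀s
              have e : 2 * W.2 * (m₀ - s) = 0 := by
                linear_combination hsum_sr + h1 - hB
              have e' : m₀ - s = 0 := cancel₀ h2Y e
              linear_combination e'
          · rcases hpair m₀ r with hB | hB
            · exfalso
              apply hm₀r
              have e : 2 * W.2 * (m₀ - r) = 0 := by
                linear_combination hsum_sr + hB - h1
              have e' : m₀ - r = 0 := cancel₀ h2Y e
              linear_combination e'
            · refine mul_left_cancel₀ h2F ?_
              linear_combination h1 - hB + hsum_sr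
        have hcr : cfun r = 2 * r * W.2 := by linear_combination hsum_sr - hcs
        have hall : ∀ m : F, cfun m = 2 * m * W.2 := by
          intro m
          rcases eq_or_ne m s with rfl | hms
          · exact hcs
          rcases eq_or_ne m r with rfl | hmr
          · exact hcr
          rcases hpair m s with h1 | h1
          · rcases hpair m r with hB | hB
            · exact absurd (h1.symm.trans hB) hsr
            · exfalso
              apply hms
              have e : 2 * W.2 * (m - s) = 0 := by
                linear_combination hsum_sr + h1 - hB
              have e' : m - s = 0 := cancel₀ h2Y e
              linear_combination e'
          · rcases hpair m r with hB | hB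
            · exfalso
              apply hmr
              have e : 2 * W.2 * (m - r) = 0 := by
                linear_combination hsum_sr + hB - h1
              have e' : m - r = 0 := cancel₀ h2Y e
              linear_combination e'
            · linear_combination h1 - hcs
        exact hcs₀ (hall s₀)
      apply hfinal (W.1, W.2, cfun 0)
      · left; rw [projI_apply]
      · intro s; exact hgen (cfun 0) s (hu s) (hconst 0 s)
    · -- Case II : W.1 ≠ 0
      have hsstarX : (W.2 / W.1) * W.1 = W.2 := div_mul_cancel₀ _ hX0
      have hfst : (W.2 / W.1) * W.1 - W.2 = 0 := by linear_combination hsstarX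
      have hustar : (A (W.2 / W.1)).1 = 0 := by
        have e := hC1 (W.2 / W.1)
        rw [hfst] at e
        apply mul_self_eq_zero.mp
        rw [e]; ring
      have hune : ∀ s : F, s ≠ W.2 / W.1 → (A s).1 ≠ 0 := by
        intro s hs h0
        apply hs
        have e := hC1 s
        rw [h0, zero_mul] at e
        have e2 : s * W.1 - W.2 = 0 := mul_self_eq_zero.mp e.symm
        field_simp
        linear_combination e2
      have hdag : ∀ s : F, s ≠ W.2 / W.1 →
          (cfun s - (W.2 / W.1) * W.2) * (cfun s - (W.2 / W.1) * W.2)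
            = (A (W.2 / W.1)).2 * (A (W.2 / W.1)).2 := by
        intro s hs
        have h := hC2 s (W.2 / W.1)
        rw [hustar, mul_zero, zero_add] at h
        have e1 := hkey s (W.2 / W.1) (hune s hs)
        have e1' : η s * ((W.2 / W.1) * (A s).1 + (A s).2)
            = cfun s - (W.2 / W.1) * W.2 := by
          linear_combination e1 + s * hsstarX
        have hs2 := hηsq s (hune s hs)
        linear_combination h
          + (((W.2 / W.1) * (A s).1 + (A s).2) * ((W.2 / W.1) * (A s).1 + (A s).2)) * hs2
          - (η s * ((W.2 / W.1) * (A s).1 + (A s).2) + (cfun s - (W.2 / W.1) * W.2)) * e1'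
      have hconst2 : ∀ s r : F, s ≠ W.2 / W.1 → r ≠ W.2 / W.1 → cfun s = cfun r := by
        intro s r hs hr
        by_contra hne
        have hk : cfun s + cfun r + 2 * (r * s * W.1 - (r + s) * W.2) = 0 := by
          rcases mul_eq_zero.mp (hrel s r (hune s hs) (hune r hr)) with h | h
          · exact absurd (by linear_combination h) hne
          · exact h
        have h2F' : cfun s + cfun r = 2 * ((W.2 / W.1) * W.2) := by
          have e3 : (cfun s - cfun r) * (cfun s + cfun r - 2 * ((W.2 / W.1) * W.2)) = 0 := by
            linear_combination hdag s hs - hdag r hr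
          rcases mul_eq_zero.mp e3 with h | h
          · exact absurd (by linear_combination h) hne
          · linear_combination h
        have e4 : 2 * (r * s * W.1 - (r + s) * W.2 + (W.2 / W.1) * W.2) = 0 := by
          linear_combination hk - h2F'
        have hzero : (s * W.1 - W.2) * (r * W.1 - W.2) = 0 := by
          refine cancel₀ h2F ?_
          linear_combination W.1 * e4 - 2 * W.2 * hsstarX
        rcases mul_eq_zero.mp hzero with h | h
        · apply hs; field_simp; linear_combination h
        · apply hr; field_simp; linear_combination h
      have hs₁ : W.2 / W.1 + 1 ≠ W.2 / W.1 := by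
        intro h
        exact one_ne_zero (by linear_combination h)
      apply hfinal (W.1, W.2, cfun (W.2 / W.1 + 1))
      · left; rw [projI_apply]
      · intro s
        rcases eq_or_ne s (W.2 / W.1) with rfl | hs
        · have hdc := hdag (W.2 / W.1 + 1) hs₁
          rw [hconst2 (W.2 / W.1 + 1) (W.2 / W.1 + 1) hs₁ hs₁] at hdc -- no-op keep
          have hfac : (cfun (W.2 / W.1 + 1) - (W.2 / W.1) * W.2 - (A (W.2 / W.1)).2)
              * (cfun (W.2 / W.1 + 1) - (W.2 / W.1) * W.2 + (A (W.2 / W.1)).2) = 0 := by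
            linear_combination hdc
          rcases mul_eq_zero.mp hfac with h | h
          · left
            rw [projS_apply]
            refine Prod.ext_iff.mpr ⟨?_, ?_⟩
            · show (W.2 / W.1) * W.1 - W.2 = (A (W.2 / W.1)).1
              rw [hustar]; exact hfst
            · show cfun (W.2 / W.1 + 1) - (W.2 / W.1) * W.2 = (A (W.2 / W.1)).2
              linear_combination h
          · right
            rw [projS_apply]
            refine Prod.ext_iff.mpr ⟨?_, ?_⟩
            · show (W.2 / W.1) * W.1 - W.2 = (-(A (W.2 / W.1))).1
              simp only [Prod.fst_neg]
              rw [hustar, neg_zero]; exact hfst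
            · show cfun (W.2 / W.1 + 1) - (W.2 / W.1) * W.2 = (-(A (W.2 / W.1))).2
              simp only [Prod.snd_neg]
              linear_combination h
        · exact hgen (cfun (W.2 / W.1 + 1)) s (hune s hs) (hconst2 (W.2 / W.1 + 1) s hs₁ hs)
  -- now the second moments of U
  obtain ⟨hX0, hwall⟩ := hK6
  have hv0 : (A 0).2 = 0 := by have e := hwall 0; linear_combination e
  have ha0 : (A 0).1 ≠ 0 := by
    intro h
    apply hA1 0
    have hA00 : A 0 = 0 := Prod.ext_iff.mpr ⟨h, hv0⟩
    rw [hA00, neg_zero]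
  have hv1 : (A 1).2 = -(A 1).1 := by have e := hwall 1; linear_combination e
  have hab : (A 0).1 * (A 0).1 = (A 1).1 * (A 1).1 := by
    have e := hC2 0 1
    rw [hv0, hv1] at e
    linear_combination e
  have mom1 : ∑ u ∈ U, u.1 * u.1 = 0 := by
    have h := hsumI (fun m => m.1 * m.1) (by simpa using sum_quad hq0 h2F 1 0 1 0)
    simp only [projI_apply, Prod.fst_neg, Prod.snd_neg] at h
    rw [h, hX0]; ring
  have mom2 : ∑ u ∈ U, u.1 * u.2.1 = 0 := by
    have h := hsumI (fun m => m.1 * m.2) (by simpa using sum_quad hq0 h2F 1 0 0 1)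
    simp only [projI_apply, Prod.fst_neg, Prod.snd_neg] at h
    rw [h, hX0]; ring
  have mom3 : ∑ u ∈ U, u.2.1 * u.2.1 = -(2 * ((A 0).1 * (A 0).1)) := by
    have h := hsumS 0 (fun m => m.1 * m.1) (by simpa using sum_quad hq0 h2F 1 0 1 0)
    simp only [projS_apply, Prod.fst_neg, Prod.snd_neg] at h
    have hL : ∑ u ∈ U, (0 * u.1 - u.2.1) * (0 * u.1 - u.2.1) = ∑ u ∈ U, u.2.1 * u.2.1 :=
      Finset.sum_congr rfl (fun u _ => by ring)
    rw [hL] at h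
    rw [h]; ring
  have mom4 : ∑ u ∈ U, u.2.1 * u.2.2 = 0 := by
    have h := hsumS 0 (fun m => m.1 * m.2) (by simpa using sum_quad hq0 h2F 1 0 0 1)
    simp only [projS_apply, Prod.fst_neg, Prod.snd_neg] at h
    have hL : ∑ u ∈ U, (0 * u.1 - u.2.1) * (u.2.2 - 0 * u.2.1)
        = ∑ u ∈ U, -(u.2.1 * u.2.2) :=
      Finset.sum_congr rfl (fun u _ => by ring)
    rw [hL, Finset.sum_neg_distrib] at h
    rw [hv0] at h
    linear_combination -h
  have mom5 : ∑ u ∈ U, u.2.2 * u.2.2 = 0 := by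
    have h := hsumS 0 (fun m => m.2 * m.2) (by simpa using sum_quad hq0 h2F 0 1 0 1)
    simp only [projS_apply, Prod.fst_neg, Prod.snd_neg] at h
    have hL : ∑ u ∈ U, (u.2.2 - 0 * u.2.1) * (u.2.2 - 0 * u.2.1) = ∑ u ∈ U, u.2.2 * u.2.2 :=
      Finset.sum_congr rfl (fun u _ => by ring)
    rw [hL] at h
    rw [h, hv0]; ring
  have mom6 : ∑ u ∈ U, u.1 * u.2.2 = 4 * ((A 0).1 * (A 0).1) := by
    have h := hsumS 1 (fun m => m.1 * m.2) (by simpa using sum_quad hq0 h2F 1 0 0 1)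
    simp only [projS_apply, Prod.fst_neg, Prod.snd_neg] at h
    have hL : ∑ u ∈ U, (1 * u.1 - u.2.1) * (u.2.2 - 1 * u.2.1)
        = ∑ u ∈ U, u.1 * u.2.2 - ∑ u ∈ U, u.1 * u.2.1 - ∑ u ∈ U, u.2.1 * u.2.2
          + ∑ u ∈ U, u.2.1 * u.2.1 := by
      rw [← Finset.sum_sub_distrib, ← Finset.sum_sub_distrib, ← Finset.sum_add_distrib]
      exact Finset.sum_congr rfl (fun u _ => by ring)
    rw [hL, mom2, mom3, mom4, hv1] at h
    linear_combination h - 2 * hab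
  -- put everything together
  have hcomp1 : ∑ u ∈ U, u.1 = 0 := by rw [← Prod.fst_sum, hsum]; rfl
  have hcomp2 : ∑ u ∈ U, u.2.1 = 0 := by rw [← Prod.fst_sum, ← Prod.snd_sum, hsum]; rfl
  have hcomp3 : ∑ u ∈ U, u.2.2 = 0 := by rw [← Prod.snd_sum, ← Prod.snd_sum, hsum]; rfl
  have sum1 : ∑ u ∈ U, dot3 u v = 0 := by
    have e : ∑ u ∈ U, dot3 u v
        = (∑ u ∈ U, u.1) * v.1 + (∑ u ∈ U, u.2.1) * v.2.1 + (∑ u ∈ U, u.2.2) * v.2.2 := by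
      rw [Finset.sum_mul, Finset.sum_mul, Finset.sum_mul,
        ← Finset.sum_add_distrib, ← Finset.sum_add_distrib]
      exact Finset.sum_congr rfl (fun u _ => by unfold dot3; ring)
    rw [e, hcomp1, hcomp2, hcomp3]; ring
  have sumS : ∑ u ∈ U, dot3 u v * dot3 u v
      = (v.1 * v.1) * ∑ u ∈ U, u.1 * u.1 + (v.2.1 * v.2.1) * ∑ u ∈ U, u.2.1 * u.2.1
        + (v.2.2 * v.2.2) * ∑ u ∈ U, u.2.2 * u.2.2 + (2 * v.1 * v.2.1) * ∑ u ∈ U, u.1 * u.2.1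
        + (2 * v.1 * v.2.2) * ∑ u ∈ U, u.1 * u.2.2
        + (2 * v.2.1 * v.2.2) * ∑ u ∈ U, u.2.1 * u.2.2 := by
    rw [Finset.mul_sum, Finset.mul_sum, Finset.mul_sum, Finset.mul_sum, Finset.mul_sum,
      Finset.mul_sum, ← Finset.sum_add_distrib, ← Finset.sum_add_distrib,
      ← Finset.sum_add_distrib, ← Finset.sum_add_distrib, ← Finset.sum_add_distrib]
    exact Finset.sum_congr rfl (fun u _ => by unfold dot3; ring)
  have hσ2 : 2 * sigmaU U v 2
      = 2 * (((A 0).1 * (A 0).1) * (v.2.1 ^ 2 - 4 * (v.1 * v.2.2))) := by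
    unfold sigmaU
    rw [esymm_two]
    have hms : (U.val.map (fun u => dot3 u v)).sum = ∑ u ∈ U, dot3 u v := rfl
    have hms2 : ((U.val.map (fun u => dot3 u v)).map (fun x => x * x)).sum
        = ∑ u ∈ U, dot3 u v * dot3 u v := by
      rw [Multiset.map_map]; rfl
    rw [hms, hms2, sum1, sumS, mom1, mom2, mom3, mom4, mom5, mom6]
    ring
  have hσ : sigmaU U v 2 = ((A 0).1 * (A 0).1) * (v.2.1 ^ 2 - 4 * (v.1 * v.2.2)) :=
    mul_left_cancel₀ h2F hσ2
  rw [hσ, tangent_iff h2F v hv]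
  constructor
  · intro h
    rcases mul_eq_zero.mp h with h | h
    · exact absurd h (mul_ne_zero ha0 ha0)
    · exact h
  · intro h; rw [h, mul_zero]
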